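/- arXiv:1805.07741 — 2 statements merged into one kernel-verified Lean document; each statement's English description precedes it below -/
import Mathlib

section
/- For every n ≥ 0 and real x ≥ 0, e^{−x}·L_n(x) = (1/n!)·d^n/dx^n (e^{−x}·x^n), where L_n is the n-th Laguerre polynomial defined by L_n(x) = Σ_{k=0}^n C(n,k)·(−x)^k/k!. -/
open Polynomial

/-- The `n`-th Laguerre polynomial. -/
noncomputable def laguerre (n : ℕ) (x : ℝ) : ℝ :=
  ∑ k ∈ Finset.range (n + 1), (n.choose k : ℝ) * (-x) ^ k / (Nat.factorial k : ℝ)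

private noncomputable def T (p : Polynomial ℝ) : Polynomial ℝ := derivative p - p

private lemma deriv_exp_mul (p : Polynomial ℝ) :
    deriv (fun y : ℝ => Real.exp (-y) * p.eval y) =
      fun y : ℝ => Real.exp (-y) * (T p).eval y := by
  funext y
  have h1 : HasDerivAt (fun y : ℝ => Real.exp (-y)) (Real.exp (-y) * (-1)) y := by
    exact (hasDerivAt_neg y).exp
  have h2 : HasDerivAt (fun y : ℝ => p.eval y) (p.derivative.eval y) y :=
    p.hasDerivAt y
  have := (h1.mul h2).deriv
  rw [show (fun y : ℝ => Real.exp (-y) * p.eval y) = (fun y : ℝ => Real.exp (-y)) * (fun y : ℝ => p.eval y) from rfl, this]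
  simp [T]
  ring

private lemma iteratedDeriv_exp_mul (m : ℕ) (p : Polynomial ℝ) :
    iteratedDeriv m (fun y : ℝ => Real.exp (-y) * p.eval y) =
      fun x : ℝ => Real.exp (-x) * (T^[m] p).eval x := by
  induction m generalizing p with
  | zero => simp
  | succ m ih =>
    rw [iteratedDeriv_succ', deriv_exp_mul, ih, Function.iterate_succ_apply]

private lemma T_iterate (m : ℕ) (p : Polynomial ℝ) :
    T^[m] p = ∑ k ∈ Finset.range (m + 1),
      ((m.choose k : ℝ) * (-1 : ℝ) ^ (m - k)) • (derivative^[k] p) := by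
  set D : Module.End ℝ (Polynomial ℝ) := Polynomial.derivative with hD
  have hTp : ∀ q : Polynomial ℝ, T q = (D - 1) q := by intro q; simp [T, hD]
  have hiter : ∀ (m : ℕ) (q : Polynomial ℝ), T^[m] q = ((D - 1) ^ m) q := by
    intro m
    induction m with
    | zero => simp
    | succ m ih =>
      intro q
      rw [Function.iterate_succ_apply, ih, hTp, pow_succ, Module.End.mul_apply]
  have hcomm : Commute D (-1 : Module.End ℝ (Polynomial ℝ)) :=
    (Commute.one_right D).neg_right
  have hbin : (D - 1) ^ m = ∑ k ∈ Finset.range (m + 1),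
      D ^ k * (-1 : Module.End ℝ (Polynomial ℝ)) ^ (m - k) * (m.choose k : Module.End ℝ (Polynomial ℝ)) := by
    rw [sub_eq_add_neg, hcomm.add_pow]
  have hneg : ∀ j : ℕ, ((-1 : Module.End ℝ (Polynomial ℝ)) ^ j) =
      ((-1 : ℝ) ^ j) • (1 : Module.End ℝ (Polynomial ℝ)) := by
    intro j
    have h : (-1 : Module.End ℝ (Polynomial ℝ)) = (-1 : ℝ) • 1 := by
      apply LinearMap.ext; intro q; simp
    rw [h, _root_.smul_pow, one_pow]
  rw [hiter m p, hbin, LinearMap.sum_apply]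
  refine Finset.sum_congr rfl fun k _ => ?_
  rw [Module.End.mul_apply, Module.End.mul_apply, hneg]
  simp only [LinearMap.smul_apply, Module.End.one_apply, Module.End.natCast_apply, map_smul,
    Module.End.pow_apply, hD, mul_smul]
  rw [smul_comm, Nat.cast_smul_eq_nsmul, Polynomial.iterate_derivative_smul]

theorem laguerre_rodrigues (n : ℕ) (x : ℝ) (hx : 0 ≤ x) :
    Real.exp (-x) * laguerre n x =
      (1 / (Nat.factorial n : ℝ)) *
        iteratedDeriv n (fun y : ℝ => Real.exp (-y) * y ^ n) x := by
  have hfun : (fun y : ℝ => Real.exp (-y) * y ^ n) =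
      fun y : ℝ => Real.exp (-y) * (X ^ n : Polynomial ℝ).eval y := by
    funext y; simp
  rw [hfun, iteratedDeriv_exp_mul, T_iterate]
  beta_reduce
  have heval : ((∑ k ∈ Finset.range (n + 1),
      ((n.choose k : ℝ) * (-1 : ℝ) ^ (n - k)) • (derivative^[k] (X ^ n : Polynomial ℝ))).eval x)
      = ∑ k ∈ Finset.range (n + 1),
        (n.choose k : ℝ) * (-1 : ℝ) ^ (n - k) * (Nat.descFactorial n k : ℝ) * x ^ (n - k) := by
    rw [Polynomial.eval_finset_sum]
    refine Finset.sum_congr rfl fun k _ => ?_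
    rw [Polynomial.iterate_derivative_X_pow_eq_C_mul]
    simp [mul_assoc]
  rw [heval, ← Finset.sum_range_reflect
    (fun k => (n.choose k : ℝ) * (-1 : ℝ) ^ (n - k) * (Nat.descFactorial n k : ℝ) * x ^ (n - k))
    (n + 1)]
  simp only [Nat.add_sub_cancel]
  simp only [laguerre, Finset.mul_sum]
  refine Finset.sum_congr rfl fun j hj => ?_
  have hj' : j ≤ n := Nat.lt_succ_iff.mp (Finset.mem_range.mp hj)
  have h1 : n - (n - j) = j := Nat.sub_sub_self hj'
  have h2 : n.choose (n - j) = n.choose j := Nat.choose_symm hj'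
  have h3 : Nat.descFactorial n (n - j) = (n - j).factorial * n.choose (n - j) := by
    rw [Nat.descFactorial_eq_factorial_mul_choose]
  have hkey : (n - j).factorial * n.choose j * j.factorial = n.factorial := by
    have := Nat.choose_mul_factorial_mul_factorial hj'
    linarith [this]
  have hfj : (j.factorial : ℝ) ≠ 0 := Nat.cast_ne_zero.mpr (Nat.factorial_ne_zero j)
  have hfn : (n.factorial : ℝ) ≠ 0 := Nat.cast_ne_zero.mpr (Nat.factorial_ne_zero n)
  rw [h1, h2, h3, h2]
  push_cast
  field_simp
  have hkey' : ((n - j).factorial : ℝ) * (n.choose j : ℝ) * (j.factorial : ℝ) = (n.factorial : ℝ) := by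
    exact_mod_cast hkey
  linear_combination (- ((n.choose j : ℝ)) * (-1 : ℝ) ^ j * x ^ j) * hkey'
end

section
/- Let α be real, T ≥ 2, and Δσ = α/log T. Let H(s) = (1/2)·s·(1−s)·π^{−s/2}·Γ(s/2). Then uniformly for s = σ + it with 1/3 ≤ σ ≤ A (A ≥ 3 fixed) and T ≤ t ≤ 2T, H(s+Δσ) = (e^{α/2} + O_α(1/log T))·H(s). -/
open Complex Finset Filter Topology

lemma sum_inv_sq_le (a : ℝ) (ha : 2 ≤ a) (n : ℕ) :
    ∑ j ∈ Finset.range n, (((j : ℝ) + a) ^ 2)⁻¹ ≤ 2 / a := by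
  have h1 : ∀ j ∈ Finset.range n,
      (((j:ℝ) + a) ^ 2)⁻¹ ≤ ((j:ℝ) + a - 1)⁻¹ - ((j:ℝ) + 1 + a - 1)⁻¹ := by
    intro j _
    have h0 : (0:ℝ) < (j:ℝ) + a - 1 := by
      have : (0:ℝ) ≤ (j:ℝ) := Nat.cast_nonneg j
      linarith
    have h0' : (0:ℝ) < (j:ℝ) + a := by linarith
    rw [show (j:ℝ) + 1 + a - 1 = (j:ℝ) + a by ring, inv_sub_inv (by linarith) (by linarith)]
    rw [show (j:ℝ) + a - ((j:ℝ) + a - 1) = 1 by ring]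
    rw [div_eq_mul_inv, one_mul]
    apply inv_anti₀ (by positivity)
    nlinarith
  calc ∑ j ∈ Finset.range n, (((j : ℝ) + a) ^ 2)⁻¹
      ≤ ∑ j ∈ Finset.range n, (((j:ℝ) + a - 1)⁻¹ - ((j:ℝ) + 1 + a - 1)⁻¹) :=
        Finset.sum_le_sum h1
    _ = (a - 1)⁻¹ - ((n:ℝ) + a - 1)⁻¹ := by
        have h := Finset.sum_range_sub' (fun j : ℕ => ((j:ℝ) + a - 1)⁻¹) n
        simp only [Nat.cast_add, Nat.cast_one, Nat.cast_zero, zero_add] at h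
        rw [← h]
    _ ≤ (a - 1)⁻¹ := by
        have h2 : (0:ℝ) < (n:ℝ) + a - 1 := by
          have : (0:ℝ) ≤ (n:ℝ) := Nat.cast_nonneg n
          linarith
        have := inv_nonneg.mpr h2.le
        linarith
    _ ≤ 2 / a := by
        have hpos : (0:ℝ) < a - 1 := by linarith
        have h3 : (a-1)⁻¹ * (a-1) = 1 := inv_mul_cancel₀ hpos.ne'
        rw [le_div_iff₀ (by linarith : (0:ℝ) < a)]
        nlinarith [mul_nonneg (inv_nonneg.mpr hpos.le) (by linarith : (0:ℝ) ≤ a - 2)]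

lemma log_diff_est (w : ℂ) (him : 0 < w.im) (hw : 2 ≤ ‖w‖) :
    ‖w⁻¹ - (Complex.log (w + 1) - Complex.log w)‖ ≤ 2 / ‖w‖ ^ 2 := by
  have hne : ∀ t : ℝ, 0 ≤ t → w + t ≠ 0 := by
    intro t _ h
    have : (w + (t:ℂ)).im = 0 := by rw [h]; simp
    simp only [Complex.add_im, Complex.ofReal_im, add_zero] at this
    linarith
  have hmem : ∀ t : ℝ, 0 ≤ t → w + (t:ℂ) ∈ Complex.slitPlane := by
    intro t _
    apply Complex.mem_slitPlane_iff.mpr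
    right
    simp only [Complex.add_im, Complex.ofReal_im, add_zero]
    linarith
  have hderiv : ∀ t ∈ Set.uIcc (0:ℝ) 1, HasDerivAt (fun u : ℝ => Complex.log (w + u))
      ((w + (t:ℂ))⁻¹) t := by
    intro t ht
    rw [Set.uIcc_of_le zero_le_one, Set.mem_Icc] at ht
    have h1 : HasDerivAt (fun u : ℂ => Complex.log (w + u)) ((w + (t:ℂ))⁻¹) (t:ℂ) := by
      have h2 : HasDerivAt (fun u : ℂ => w + u) 1 (t:ℂ) := (hasDerivAt_id _).const_add w
      simpa [Function.comp_def] using (Complex.hasDerivAt_log (hmem t ht.1)).comp (t:ℂ) h2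
    exact h1.comp_ofReal
  have hcont : ContinuousOn (fun t : ℝ => (w + (t:ℂ))⁻¹) (Set.uIcc (0:ℝ) 1) := by
    apply ContinuousOn.inv₀
    · exact (continuous_const.add Complex.continuous_ofReal).continuousOn
    · intro t ht
      rw [Set.uIcc_of_le zero_le_one, Set.mem_Icc] at ht
      exact hne t ht.1
  have hint : IntervalIntegrable (fun t : ℝ => (w + (t:ℂ))⁻¹) MeasureTheory.volume 0 1 :=
    hcont.intervalIntegrable
  have hftc : ∫ t in (0:ℝ)..1, (w + (t:ℂ))⁻¹ =
      Complex.log (w + 1) - Complex.log w := by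
    have := intervalIntegral.integral_eq_sub_of_hasDerivAt hderiv hint
    simpa using this
  have hconst : ∫ t in (0:ℝ)..1, w⁻¹ = w⁻¹ := by simp
  rw [← hftc, ← hconst, ← intervalIntegral.integral_sub (by simp : IntervalIntegrable _ _ _ _) hint]
  have hb : ∀ t ∈ Set.uIoc (0:ℝ) 1, ‖w⁻¹ - (w + (t:ℂ))⁻¹‖ ≤ 2 / ‖w‖ ^ 2 := by
    intro t ht
    rw [Set.uIoc_of_le zero_le_one, Set.mem_Ioc] at ht
    have ht0 : (0:ℝ) ≤ t := ht.1.le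
    have h2 : ‖(t:ℂ)‖ ≤ 1 := by
      rw [Complex.norm_real, Real.norm_eq_abs, _root_.abs_of_nonneg ht0]; exact ht.2
    have habs : ‖w‖ / 2 ≤ ‖w + t‖ := by
      have h3 : ‖w‖ ≤ ‖w + t‖ + ‖(t:ℂ)‖ := by
        have := norm_add_le (w + (t:ℂ)) (-(t:ℂ))
        simpa using this
      linarith
    have hwne : w ≠ 0 := by
      intro h0
      rw [h0] at hw
      simp at hw
      linarith
    have key : w⁻¹ - (w + (t:ℂ))⁻¹ = (t:ℂ) * (w⁻¹ * (w + (t:ℂ))⁻¹) := by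
      rw [inv_sub_inv hwne (hne t ht0)]
      rw [show w + (t:ℂ) - w = (t:ℂ) by ring]
      field_simp
    rw [key]
    rw [norm_mul, norm_mul, Complex.norm_real, Real.norm_eq_abs, _root_.abs_of_nonneg ht0, norm_inv, norm_inv]
    have hw0 : (0:ℝ) < ‖w‖ := by linarith
    have hwt0 : (0:ℝ) < ‖w + t‖ := by linarith
    calc t * ((‖w‖)⁻¹ * (‖w + t‖)⁻¹)
        ≤ 1 * ((‖w‖)⁻¹ * (‖w‖ / 2)⁻¹) := by
          apply mul_le_mul ht.2
          · apply mul_le_mul_of_nonneg_left _ (inv_nonneg.mpr hw0.le)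
            exact inv_anti₀ (by linarith) habs
          · positivity
          · norm_num
      _ = 2 / ‖w‖ ^ 2 := by
          field_simp
  have := intervalIntegral.norm_integral_le_of_norm_le_const hb
  simpa using this

lemma gamma_ratio_est (z : ℂ) (h : ℝ) (hre : 0 < z.re) (him : 3 ≤ z.im) (hh : |h| ≤ 1/4) :
    ‖Complex.Gamma (z + (h:ℂ)) * (Complex.Gamma z)⁻¹ - Complex.exp ((h:ℂ) * Complex.log z)‖ ≤
      ‖Complex.exp ((h:ℂ) * Complex.log z)‖ * (6 / z.im) := by
  set a := z.im with ha
  have ha2 : 2 ≤ a := by linarith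
  have ha0 : 0 < a := by linarith
  -- facts about z + j
  have hzj_im : ∀ j : ℕ, (z + (j:ℂ)).im = a := by intro j; simp [ha]
  have hzj_ne : ∀ j : ℕ, z + (j:ℂ) ≠ 0 := by
    intro j he
    have h0 : (z + (j:ℂ)).im = 0 := by rw [he]; simp
    rw [hzj_im j] at h0; linarith
  have hzhj_ne : ∀ j : ℕ, z + (h:ℂ) + (j:ℂ) ≠ 0 := by
    intro j he
    have h0 : (z + (h:ℂ) + (j:ℂ)).im = 0 := by rw [he]; simp
    simp only [Complex.add_im, Complex.ofReal_im, Complex.natCast_im, add_zero] at h0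
    linarith
  have hzj_abs : ∀ j : ℕ, a ≤ ‖z + (j:ℂ)‖ := by
    intro j
    calc a = (z + (j:ℂ)).im := (hzj_im j).symm
      _ ≤ |(z + (j:ℂ)).im| := le_abs_self _
      _ ≤ ‖z + (j:ℂ)‖ := Complex.abs_im_le_norm _
  have hzj_sq : ∀ j : ℕ, ((j:ℝ) + a)^2 ≤ 2 * ‖z + (j:ℂ)‖^2 := by
    intro j
    have h1 : ‖z + (j:ℂ)‖^2 = (z.re + j)^2 + a^2 := by
      rw [Complex.sq_norm, Complex.normSq_apply]
      simp [ha]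
      ring
    have hj0 : (0:ℝ) ≤ (j:ℝ) := Nat.cast_nonneg j
    nlinarith [sq_nonneg ((j:ℝ) - a), mul_nonneg hre.le (by linarith : (0:ℝ) ≤ z.re + 2*(j:ℝ))]
  have habs_inv : ∀ j : ℕ, (‖z + (j:ℂ)‖^2)⁻¹ ≤ 2 * (((j:ℝ) + a)^2)⁻¹ := by
    intro j
    have h2 : (0:ℝ) < ((j:ℝ) + a)^2 := by positivity
    have h3 : (0:ℝ) < ‖z + (j:ℂ)‖^2 := by
      have := hzj_abs j; nlinarith
    rw [inv_le_iff_one_le_mul₀ h3]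
    have h5 : (((j:ℝ) + a) ^ 2)⁻¹ * (((j:ℝ) + a) ^ 2) = 1 := inv_mul_cancel₀ h2.ne'
    nlinarith [mul_nonneg (inv_nonneg.mpr h2.le) (sub_nonneg.mpr (hzj_sq j))]
  -- the log terms
  set tj : ℕ → ℂ := fun j => Complex.log (1 + (h:ℂ) / (z + (j:ℂ))) with htj_def
  have hsmall : ∀ j : ℕ, ‖(h:ℂ) / (z + (j:ℂ))‖ ≤ 1/8 := by
    intro j
    rw [norm_div, Complex.norm_real, Real.norm_eq_abs]
    rw [div_le_iff₀ (by linarith [hzj_abs j] : (0:ℝ) < ‖z + (j:ℂ)‖)]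
    calc |h| ≤ 1/4 := hh
      _ ≤ (1/8) * 2 := by norm_num
      _ ≤ (1/8) * ‖z + (j:ℂ)‖ := by
          apply mul_le_mul_of_nonneg_left _ (by norm_num)
          linarith [hzj_abs j]
  have h1ne : ∀ j : ℕ, (1:ℂ) + (h:ℂ) / (z + (j:ℂ)) ≠ 0 := by
    intro j he
    have h1 : ‖(1:ℂ)‖ = ‖-((h:ℂ) / (z + (j:ℂ)))‖ := by
      congr 1
      linear_combination he
    rw [norm_one, norm_neg] at h1
    have := hsmall j
    rw [← h1] at this
    norm_num at this
  have hexp_tj : ∀ j : ℕ, Complex.exp (tj j) = 1 + (h:ℂ) / (z + (j:ℂ)) :=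
    fun j => Complex.exp_log (h1ne j)
  have htj_est : ∀ j : ℕ, ‖tj j - (h:ℂ) / (z + (j:ℂ))‖ ≤ 2 * h^2 * (((j:ℝ) + a)^2)⁻¹ := by
    intro j
    have hs := hsmall j
    calc ‖tj j - (h:ℂ) / (z + (j:ℂ))‖
        ≤ ‖(h:ℂ) / (z + (j:ℂ))‖^2 * (1 - ‖(h:ℂ) / (z + (j:ℂ))‖)⁻¹ / 2 :=
          Complex.norm_log_one_add_sub_self_le (by linarith)
      _ ≤ ‖(h:ℂ) / (z + (j:ℂ))‖^2 := by
          have h1 : (1 - ‖(h:ℂ) / (z + (j:ℂ))‖)⁻¹ ≤ 2 := by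
            rw [inv_le_iff_one_le_mul₀ (by linarith [norm_nonneg ((h:ℂ) / (z + (j:ℂ)))])]
            linarith [norm_nonneg ((h:ℂ) / (z + (j:ℂ)))]
          have h2 : (0:ℝ) ≤ ‖(h:ℂ) / (z + (j:ℂ))‖^2 := sq_nonneg _
          nlinarith
      _ ≤ 2 * h^2 * (((j:ℝ) + a)^2)⁻¹ := by
          rw [norm_div, Complex.norm_real, Real.norm_eq_abs, div_pow,
            div_eq_mul_inv, _root_.sq_abs]
          calc h^2 * (‖z + (j:ℂ)‖^2)⁻¹ ≤ h^2 * (2 * (((j:ℝ) + a)^2)⁻¹) := by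
                apply mul_le_mul_of_nonneg_left (habs_inv j) (sq_nonneg h)
            _ = 2 * h^2 * (((j:ℝ) + a)^2)⁻¹ := by ring
  -- per-term estimate
  have hterm : ∀ j : ℕ, ‖(h:ℂ) * (Complex.log (z + (j:ℂ) + 1) - Complex.log (z + (j:ℂ))) - tj j‖
      ≤ (3/2) * (((j:ℝ) + a)^2)⁻¹ := by
    intro j
    have hld := log_diff_est (z + (j:ℂ)) (by rw [hzj_im j]; linarith) (by linarith [hzj_abs j])
    have e1 : (h:ℂ) * (Complex.log (z + (j:ℂ) + 1) - Complex.log (z + (j:ℂ))) - tj j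
        = (-(h:ℂ)) * ((z + (j:ℂ))⁻¹ - (Complex.log (z + (j:ℂ) + 1) - Complex.log (z + (j:ℂ))))
          - (tj j - (h:ℂ) / (z + (j:ℂ))) := by
      rw [div_eq_mul_inv]
      ring
    rw [e1]
    calc ‖_ - _‖ ≤ ‖(-(h:ℂ)) * ((z + (j:ℂ))⁻¹ - (Complex.log (z + (j:ℂ) + 1) - Complex.log (z + (j:ℂ))))‖
          + ‖tj j - (h:ℂ) / (z + (j:ℂ))‖ := norm_sub_le _ _
      _ ≤ |h| * (2 / ‖z + (j:ℂ)‖^2) + 2 * h^2 * (((j:ℝ) + a)^2)⁻¹ := by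
          apply add_le_add _ (htj_est j)
          rw [norm_mul, norm_neg, Complex.norm_real, Real.norm_eq_abs]
          exact mul_le_mul_of_nonneg_left hld (abs_nonneg h)
      _ ≤ (3/2) * (((j:ℝ) + a)^2)⁻¹ := by
          have h1 : |h| * (2 / ‖z + (j:ℂ)‖^2) ≤ (1/4) * (2 * (2 * (((j:ℝ) + a)^2)⁻¹)) := by
            rw [div_eq_mul_inv]
            have := habs_inv j
            have h2 : (0:ℝ) ≤ (((j:ℝ) + a)^2)⁻¹ := by positivity
            have h3 : (0:ℝ) ≤ (‖z + (j:ℂ)‖^2)⁻¹ := by positivity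
            nlinarith [abs_nonneg h]
          have h4 : 2 * h^2 * (((j:ℝ) + a)^2)⁻¹ ≤ 2 * (1/16) * (((j:ℝ) + a)^2)⁻¹ := by
            have h2 : (0:ℝ) ≤ (((j:ℝ) + a)^2)⁻¹ := by positivity
            have h5 : h^2 ≤ 1/16 := by nlinarith [_root_.sq_abs h, mul_le_mul hh hh (abs_nonneg h) (by norm_num : (0:ℝ) ≤ 1/4)]
            nlinarith
          have h2 : (0:ℝ) ≤ (((j:ℝ) + a)^2)⁻¹ := by positivity
          nlinarith
  -- telescoping identity
  have htel : ∀ n : ℕ, ∑ j ∈ Finset.range (n+1),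
      (Complex.log (z + (j:ℂ) + 1) - Complex.log (z + (j:ℂ)))
      = Complex.log (z + (n:ℂ) + 1) - Complex.log z := by
    intro n
    have h0 := Finset.sum_range_sub (fun j : ℕ => Complex.log (z + (j:ℂ))) (n+1)
    calc ∑ j ∈ Finset.range (n+1), (Complex.log (z + (j:ℂ) + 1) - Complex.log (z + (j:ℂ)))
        = ∑ j ∈ Finset.range (n+1), (Complex.log (z + ((j+1:ℕ):ℂ)) - Complex.log (z + (j:ℂ))) := by
          apply Finset.sum_congr rfl
          intro j _
          push_cast
          rw [add_assoc]
      _ = Complex.log (z + ((n+1:ℕ):ℂ)) - Complex.log (z + ((0:ℕ):ℂ)) := h0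
      _ = Complex.log (z + (n:ℂ) + 1) - Complex.log z := by push_cast; rw [add_assoc]; norm_num
  -- GammaSeq identity
  have hGS : ∀ n : ℕ, 1 ≤ n → Complex.GammaSeq (z + (h:ℂ)) n
      = Complex.exp ((h:ℂ) * (Real.log n : ℂ) - ∑ j ∈ Finset.range (n+1), tj j)
        * Complex.GammaSeq z n := by
    intro n hn
    have hn0 : (n:ℂ) ≠ 0 := Nat.cast_ne_zero.mpr (by omega)
    have hP : (∏ j ∈ Finset.range (n+1), (z + (j:ℂ))) ≠ 0 :=
      Finset.prod_ne_zero_iff.mpr fun j _ => hzj_ne j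
    have hPh : (∏ j ∈ Finset.range (n+1), (z + (h:ℂ) + (j:ℂ))) ≠ 0 :=
      Finset.prod_ne_zero_iff.mpr fun j _ => hzhj_ne j
    have hexp_sum : Complex.exp (∑ j ∈ Finset.range (n+1), tj j)
        = (∏ j ∈ Finset.range (n+1), (z + (h:ℂ) + (j:ℂ)))
          / (∏ j ∈ Finset.range (n+1), (z + (j:ℂ))) := by
      rw [Complex.exp_sum, ← Finset.prod_div_distrib]
      apply Finset.prod_congr rfl
      intro j _
      rw [hexp_tj j, eq_div_iff (hzj_ne j), add_mul, one_mul,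
        div_mul_cancel₀ _ (hzj_ne j)]
      ring
    have hexp_logn : Complex.exp ((h:ℂ) * (Real.log n : ℂ)) = (n:ℂ) ^ (h:ℂ) := by
      rw [Complex.cpow_def_of_ne_zero hn0, Complex.natCast_log, mul_comm]
    rw [Complex.exp_sub, hexp_sum, hexp_logn, Complex.GammaSeq, Complex.GammaSeq,
      Complex.cpow_add _ _ hn0]
    field_simp
  have hGS_ne : ∀ n : ℕ, 1 ≤ n → Complex.GammaSeq z n ≠ 0 := by
    intro n hn
    have hn0 : (n:ℂ) ≠ 0 := Nat.cast_ne_zero.mpr (by omega)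
    have hP : (∏ j ∈ Finset.range (n+1), (z + (j:ℂ))) ≠ 0 :=
      Finset.prod_ne_zero_iff.mpr fun j _ => hzj_ne j
    rw [Complex.GammaSeq]
    apply div_ne_zero (mul_ne_zero _ _) hP
    · rw [Complex.cpow_def_of_ne_zero hn0]
      exact Complex.exp_ne_zero _
    · exact_mod_cast Nat.cast_ne_zero.mpr (Nat.factorial_ne_zero n)
  -- per-n inequality
  have hper : ∀ n : ℕ, 1 ≤ n →
      ‖Complex.GammaSeq (z + (h:ℂ)) n / Complex.GammaSeq z n
        - Complex.exp ((h:ℂ) * Complex.log z + (h:ℂ) * (Real.log n : ℂ)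
            - (h:ℂ) * Complex.log (z + (n:ℂ) + 1))‖
      ≤ ‖Complex.exp ((h:ℂ) * Complex.log z + (h:ℂ) * (Real.log n : ℂ)
            - (h:ℂ) * Complex.log (z + (n:ℂ) + 1))‖ * (6 / a) := by
    intro n hn
    set U := (h:ℂ) * (Real.log n : ℂ) - ∑ j ∈ Finset.range (n+1), tj j with hU
    set V := (h:ℂ) * Complex.log z + (h:ℂ) * (Real.log n : ℂ)
      - (h:ℂ) * Complex.log (z + (n:ℂ) + 1) with hV
    have hUV : ‖U - V‖ ≤ 3 / a := by
      have e0 : U - V = ∑ j ∈ Finset.range (n+1),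
          ((h:ℂ) * (Complex.log (z + (j:ℂ) + 1) - Complex.log (z + (j:ℂ))) - tj j) := by
        rw [Finset.sum_sub_distrib, ← Finset.mul_sum, htel n, hU, hV]
        ring
      rw [e0]
      calc ‖∑ j ∈ Finset.range (n+1),
            ((h:ℂ) * (Complex.log (z + (j:ℂ) + 1) - Complex.log (z + (j:ℂ))) - tj j)‖
          ≤ ∑ j ∈ Finset.range (n+1),
            ‖(h:ℂ) * (Complex.log (z + (j:ℂ) + 1) - Complex.log (z + (j:ℂ))) - tj j‖ :=
            norm_sum_le _ _
        _ ≤ ∑ j ∈ Finset.range (n+1), (3/2) * (((j:ℝ) + a)^2)⁻¹ :=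
            Finset.sum_le_sum fun j _ => hterm j
        _ = (3/2) * ∑ j ∈ Finset.range (n+1), (((j:ℝ) + a)^2)⁻¹ := by
            rw [Finset.mul_sum]
        _ ≤ (3/2) * (2 / a) :=
            mul_le_mul_of_nonneg_left (sum_inv_sq_le a ha2 (n+1)) (by norm_num)
        _ = 3 / a := by ring
    rw [hGS n hn, mul_div_assoc, div_self (hGS_ne n hn), mul_one]
    have e3 : V + (U - V) = U := by ring
    have e2 : Complex.exp U - Complex.exp V = Complex.exp V * (Complex.exp (U - V) - 1) := by
      rw [mul_sub, mul_one, ← Complex.exp_add, e3]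
    rw [e2, norm_mul]
    apply mul_le_mul_of_nonneg_left _ (norm_nonneg _)
    have h31 : 3 / a ≤ 1 := by rw [div_le_one ha0]; linarith
    have h1 : ‖U - V‖ ≤ 1 := le_trans hUV h31
    calc ‖Complex.exp (U - V) - 1‖ ≤ 2 * ‖U - V‖ := Complex.norm_exp_sub_one_le h1
      _ ≤ 6 / a := by
          rw [show (6:ℝ)/a = 2 * (3/a) by ring]
          apply mul_le_mul_of_nonneg_left hUV (by norm_num)
  -- limit of the auxiliary log sequence
  have hlog_lim : Filter.Tendsto
      (fun n : ℕ => Complex.log (z + (n:ℂ) + 1) - (Real.log n : ℂ))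
      Filter.atTop (𝓝 0) := by
    have h1 : ∀ n : ℕ, 1 ≤ n → Complex.log (z + (n:ℂ) + 1) - (Real.log n : ℂ)
        = Complex.log (1 + (z + 1) / (n:ℂ)) := by
      intro n hn
      have hnR : (0:ℝ) < (n:ℝ) := by exact_mod_cast Nat.pos_of_ne_zero (by omega)
      have hn0 : (n:ℂ) ≠ 0 := Nat.cast_ne_zero.mpr (by omega)
      have hxne : (1:ℂ) + (z + 1) / (n:ℂ) ≠ 0 := by
        intro he
        have h2 : ((1:ℂ) + (z + 1) / (n:ℂ)).im = 0 := by rw [he]; simp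
        simp only [Complex.add_im, Complex.one_im, Complex.div_natCast_im, Complex.add_im,
          Complex.one_im, add_zero, zero_add] at h2
        have h3 : z.im / (n:ℝ) = 0 := h2
        have h4 : z.im ≠ 0 := by linarith
        exact h4 (by field_simp at h3; simpa using h3)
      have key : ((n:ℝ):ℂ) * (1 + (z + 1) / (n:ℂ)) = z + (n:ℂ) + 1 := by
        push_cast
        field_simp
        ring
      rw [← key, Complex.log_ofReal_mul hnR hxne]
      push_cast
      ring
    have h2 : Filter.Tendsto (fun n : ℕ => (1:ℂ) + (z + 1) / (n:ℂ)) Filter.atTop (𝓝 1) := by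
      have h3 : Filter.Tendsto (fun n : ℕ => (z + 1) / (n:ℂ)) Filter.atTop (𝓝 0) := by
        have h4 : Filter.Tendsto (fun n : ℕ => ((n:ℝ)⁻¹ : ℂ)) Filter.atTop (𝓝 0) := by
          have h4' := (Complex.continuous_ofReal.tendsto 0).comp
            (tendsto_inv_atTop_zero.comp tendsto_natCast_atTop_atTop)
          simpa [Function.comp_def] using h4'
        have h5 : (fun n : ℕ => (z + 1) / (n:ℂ)) = fun n : ℕ => (z + 1) * ((n:ℝ)⁻¹ : ℂ) := by
          funext n
          push_cast
          rw [div_eq_mul_inv]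
        rw [h5]
        simpa using h4.const_mul (z + 1)
      have := h3.const_add (1:ℂ)
      simpa using this
    have h6 : Filter.Tendsto (fun n : ℕ => Complex.log (1 + (z + 1) / (n:ℂ)))
        Filter.atTop (𝓝 0) := by
      have h7 : ContinuousAt Complex.log 1 :=
        continuousAt_clog (by simp [Complex.mem_slitPlane_iff])
      have := h7.tendsto.comp h2
      rwa [Complex.log_one] at this
    apply h6.congr'
    filter_upwards [Filter.eventually_ge_atTop 1] with n hn
    exact (h1 n hn).symm
  -- assemble the limit
  have hz_ne : ∀ m : ℕ, z ≠ -(m:ℂ) := by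
    intro m he
    have h0 : z.im = 0 := by rw [he]; simp
    rw [← ha] at h0
    linarith
  have hG_ne : Complex.Gamma z ≠ 0 := Complex.Gamma_ne_zero hz_ne
  have hratio : Filter.Tendsto
      (fun n => Complex.GammaSeq (z + (h:ℂ)) n / Complex.GammaSeq z n)
      Filter.atTop (𝓝 (Complex.Gamma (z + (h:ℂ)) / Complex.Gamma z)) :=
    (Complex.GammaSeq_tendsto_Gamma _).div (Complex.GammaSeq_tendsto_Gamma _) hG_ne
  have hVexp : Filter.Tendsto (fun n : ℕ => Complex.exp ((h:ℂ) * Complex.log z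
      + (h:ℂ) * (Real.log n : ℂ) - (h:ℂ) * Complex.log (z + (n:ℂ) + 1))) Filter.atTop
      (𝓝 (Complex.exp ((h:ℂ) * Complex.log z))) := by
    apply Filter.Tendsto.cexp
    have h8 := (hlog_lim.const_mul ((h:ℂ))).neg
    have h9 := h8.const_add ((h:ℂ) * Complex.log z)
    simp only [mul_zero, neg_zero, add_zero] at h9
    apply h9.congr
    intro n
    ring
  have hlhs : Filter.Tendsto (fun n : ℕ =>
      ‖Complex.GammaSeq (z + (h:ℂ)) n / Complex.GammaSeq z n
        - Complex.exp ((h:ℂ) * Complex.log z + (h:ℂ) * (Real.log n : ℂ)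
            - (h:ℂ) * Complex.log (z + (n:ℂ) + 1))‖) Filter.atTop
      (𝓝 ‖Complex.Gamma (z + (h:ℂ)) / Complex.Gamma z
          - Complex.exp ((h:ℂ) * Complex.log z)‖) :=
    (hratio.sub hVexp).norm
  have hrhs : Filter.Tendsto (fun n : ℕ =>
      ‖Complex.exp ((h:ℂ) * Complex.log z + (h:ℂ) * (Real.log n : ℂ)
          - (h:ℂ) * Complex.log (z + (n:ℂ) + 1))‖ * (6 / a)) Filter.atTop
      (𝓝 (‖Complex.exp ((h:ℂ) * Complex.log z)‖ * (6 / a))) :=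
    hVexp.norm.mul_const _
  have hfin := le_of_tendsto_of_tendsto hlhs hrhs ?_
  · rwa [div_eq_mul_inv] at hfin
  · filter_upwards [Filter.eventually_ge_atTop 1] with n hn
    exact hper n hn

set_option maxHeartbeats 2000000 in
theorem H_translation_asymptotic (α A : ℝ) (hA : 3 ≤ A)
    (H : ℂ → ℂ)
    (hH : ∀ s : ℂ, H s = (1/2 : ℂ) * s * (1 - s) * (Real.pi : ℂ) ^ (-s / 2) *
      Complex.Gamma (s / 2)) :
    ∃ C : ℝ, 0 < C ∧ ∀ T : ℝ, 2 ≤ T → ∀ s : ℂ,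
      1/3 ≤ s.re → s.re ≤ A → T ≤ s.im → s.im ≤ 2 * T →
      ∃ E : ℂ, ‖E‖ ≤ C / Real.log T ∧
        H (s + ((α / Real.log T : ℝ) : ℂ)) = ((Real.exp (α / 2) : ℂ) + E) * H s := by
  classical
  set F : ℂ → ℂ := fun w => (1/2 : ℂ) * w * (1 - w) *
      Complex.exp (Complex.log (Real.pi : ℂ) * (-w / 2)) * Complex.Gamma (w / 2) with hF
  have hpi0 : (Real.pi : ℂ) ≠ 0 := Complex.ofReal_ne_zero.mpr Real.pi_ne_zero
  have hHF : ∀ w, H w = F w := by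
    intro w
    rw [hH w, hF]
    simp only
    rw [Complex.cpow_def_of_ne_zero hpi0]
  have hFne : ∀ w : ℂ, w.im ≠ 0 → F w ≠ 0 := by
    intro w hw
    have hw0 : w ≠ 0 := fun h0 => hw (by rw [h0]; simp)
    have hw1 : (1:ℂ) - w ≠ 0 := by
      intro h0
      have hw1' : w = 1 := by linear_combination -h0
      exact hw (by rw [hw1']; simp)
    have hG : Complex.Gamma (w/2) ≠ 0 := by
      apply Complex.Gamma_ne_zero
      intro m he
      have h0 : (w/2).im = 0 := by rw [he]; simp
      rw [Complex.div_ofNat_im] at h0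
      exact hw (by linarith)
    exact mul_ne_zero (mul_ne_zero (mul_ne_zero (mul_ne_zero (by norm_num) hw0) hw1)
      (Complex.exp_ne_zero _)) hG
  have hFcont : ∀ w : ℂ, w.im ≠ 0 → ContinuousAt F w := by
    intro w hw
    have hGc : ContinuousAt (fun u : ℂ => Complex.Gamma (u / 2)) w := by
      have hne : ∀ m : ℕ, w / 2 ≠ -(m:ℂ) := by
        intro m he
        have h0 : (w/2).im = 0 := by rw [he]; simp
        rw [Complex.div_ofNat_im] at h0
        exact hw (by linarith)
      exact ContinuousAt.comp (g := Complex.Gamma) (f := fun u : ℂ => u / 2)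
        (Complex.differentiableAt_Gamma _ hne).continuousAt
        ((continuous_id.div_const (2:ℂ)).continuousAt)
    have hec : ContinuousAt
        (fun u : ℂ => Complex.exp (Complex.log (Real.pi:ℂ) * (-u/2))) w :=
      (Complex.continuous_exp.comp
        (continuous_const.mul ((continuous_id.neg).div_const 2))).continuousAt
    exact (((continuousAt_const.mul continuousAt_id).mul
      (continuousAt_const.sub continuousAt_id)).mul hec).mul hGc
  set K : ℝ := |α| * (5 + Real.log (A + 2) + Real.pi) with hKdef
  have hlogA2 : (0:ℝ) ≤ Real.log (A + 2) := Real.log_nonneg (by linarith)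
  have hK0 : 0 ≤ K :=
    mul_nonneg (abs_nonneg α) (by positivity)
  set T₀ : ℝ := Real.exp (2 + 2*|α| + K) with hT₀def
  have hT₀log : Real.log T₀ = 2 + 2*|α| + K := Real.log_exp _
  have hT₀pos : (0:ℝ) < T₀ := Real.exp_pos _
  have hT₀7 : (7:ℝ) ≤ T₀ := by
    have h1 : Real.exp 2 ≤ T₀ := by
      apply Real.exp_le_exp.mpr
      have := abs_nonneg α
      linarith
    have h2 := Real.exp_one_gt_d9
    have h3 : Real.exp 2 = Real.exp 1 * Real.exp 1 := by
      rw [← Real.exp_add]; norm_num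
    nlinarith
  -- compactness bound
  obtain ⟨M, hM⟩ : ∃ M, ∀ p ∈ (Set.Icc (2:ℝ) T₀ ×ˢ (Set.Icc (1/3:ℝ) A ×ˢ Set.Icc (2:ℝ) (2*T₀))),
      ‖F ((p.2.1:ℂ) + ((α / Real.log p.1 : ℝ):ℂ) + (p.2.2:ℂ) * Complex.I)
        / F ((p.2.1:ℂ) + (p.2.2:ℂ) * Complex.I)‖ ≤ M := by
    apply IsCompact.exists_bound_of_continuousOn
      ((isCompact_Icc).prod ((isCompact_Icc).prod isCompact_Icc))
    intro p hp
    simp only [Set.mem_prod, Set.mem_Icc] at hp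
    obtain ⟨⟨hp1, _⟩, ⟨_, _⟩, hp3, _⟩ := hp
    apply ContinuousAt.continuousWithinAt
    have hp1pos : (0:ℝ) < p.1 := by linarith
    have hlogpos : (0:ℝ) < Real.log p.1 := Real.log_pos (by linarith)
    have hc1 : ContinuousAt (fun q : ℝ × ℝ × ℝ => (q.2.1:ℂ)) p :=
      Complex.continuous_ofReal.continuousAt.comp
        ((continuous_fst.comp continuous_snd).continuousAt)
    have hc3 : ContinuousAt (fun q : ℝ × ℝ × ℝ => (q.2.2:ℂ) * Complex.I) p :=
      ((Complex.continuous_ofReal.comp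
        (continuous_snd.comp continuous_snd)).mul continuous_const).continuousAt
    have hc2 : ContinuousAt (fun q : ℝ × ℝ × ℝ => ((α / Real.log q.1 : ℝ):ℂ)) p := by
      apply Complex.continuous_ofReal.continuousAt.comp
      exact ContinuousAt.div continuousAt_const
        ((Real.continuousAt_log hp1pos.ne').comp continuous_fst.continuousAt) hlogpos.ne'
    have hmap1 : ContinuousAt (fun q : ℝ × ℝ × ℝ =>
        (q.2.1:ℂ) + ((α / Real.log q.1 : ℝ):ℂ) + (q.2.2:ℂ) * Complex.I) p :=
      (hc1.add hc2).add hc3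
    have hmap2 : ContinuousAt (fun q : ℝ × ℝ × ℝ => (q.2.1:ℂ) + (q.2.2:ℂ) * Complex.I) p :=
      hc1.add hc3
    have him1 : ((p.2.1:ℂ) + ((α / Real.log p.1 : ℝ):ℂ) + (p.2.2:ℂ) * Complex.I).im ≠ 0 := by
      simp only [Complex.add_im, Complex.ofReal_im, Complex.mul_im, Complex.I_re,
        Complex.I_im, Complex.ofReal_re, mul_zero, mul_one, zero_add, add_zero]
      linarith
    have him2 : ((p.2.1:ℂ) + (p.2.2:ℂ) * Complex.I).im ≠ 0 := by
      simp only [Complex.add_im, Complex.ofReal_im, Complex.mul_im, Complex.I_re,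
        Complex.I_im, Complex.ofReal_re, mul_zero, mul_one, zero_add, add_zero]
      linarith
    exact ContinuousAt.div
      (ContinuousAt.comp (g := F)
        (f := fun q : ℝ × ℝ × ℝ => (q.2.1:ℂ) + ((α / Real.log q.1 : ℝ):ℂ) + (q.2.2:ℂ) * Complex.I)
        (hFcont _ him1) hmap1)
      (ContinuousAt.comp (g := F)
        (f := fun q : ℝ × ℝ × ℝ => (q.2.1:ℂ) + (q.2.2:ℂ) * Complex.I)
        (hFcont _ him2) hmap2)
      (hFne _ him2)
  set C1 : ℝ := Real.exp (α/2) * (2*K + 36) + 1 with hC1def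
  set C2 : ℝ := (M + Real.exp (α/2)) * Real.log T₀ + 1 with hC2def
  refine ⟨max C1 C2, ?_, ?_⟩
  · have h1 : (0:ℝ) < C1 := by
      rw [hC1def]
      have h2 : (0:ℝ) ≤ Real.exp (α/2) * (2*K + 36) :=
        mul_nonneg (Real.exp_pos _).le (by linarith)
      linarith
    exact lt_of_lt_of_le h1 (le_max_left _ _)
  intro T hT s hs1 hs2 hs3 hs4
  have hlogT0 : (0:ℝ) < Real.log T := Real.log_pos (by linarith)
  have hsim2 : (2:ℝ) ≤ s.im := by linarith
  have hsimne : s.im ≠ 0 := by linarith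
  by_cases hTsplit : T ≤ T₀
  · -- small T regime : compactness bound
    set Q : ℂ := F ((s.re:ℂ) + ((α / Real.log T : ℝ):ℂ) + (s.im:ℂ) * Complex.I)
        / F ((s.re:ℂ) + (s.im:ℂ) * Complex.I) with hQdef
    refine ⟨Q - (Real.exp (α/2) : ℂ), ?_, ?_⟩
    · have hp : ((T, s.re, s.im) : ℝ × ℝ × ℝ) ∈
          (Set.Icc (2:ℝ) T₀ ×ˢ (Set.Icc (1/3:ℝ) A ×ˢ Set.Icc (2:ℝ) (2*T₀))) := by
        refine ⟨⟨hT, hTsplit⟩, ⟨hs1, hs2⟩, hsim2, ?_⟩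
        calc s.im ≤ 2*T := hs4
          _ ≤ 2*T₀ := by linarith
      have hQM := hM _ hp
      have hQ0 : (0:ℝ) ≤ ‖Q‖ := norm_nonneg _
      have hMnn : (0:ℝ) ≤ M := le_trans hQ0 hQM
      have hEbd : ‖Q - (Real.exp (α/2) : ℂ)‖ ≤ M + Real.exp (α/2) := by
        calc ‖Q - (Real.exp (α/2) : ℂ)‖ ≤ ‖Q‖ + ‖((Real.exp (α/2) : ℝ):ℂ)‖ := norm_sub_le _ _
          _ ≤ M + Real.exp (α/2) := by
              rw [Complex.norm_real, Real.norm_eq_abs, abs_of_pos (Real.exp_pos _)]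
              exact add_le_add_left hQM _
      apply le_trans hEbd
      rw [le_div_iff₀ hlogT0]
      have hlogTT : Real.log T ≤ Real.log T₀ := Real.log_le_log (by linarith) hTsplit
      have hlog2 : (0:ℝ) ≤ Real.log T := hlogT0.le
      calc (M + Real.exp (α/2)) * Real.log T ≤ (M + Real.exp (α/2)) * Real.log T₀ := by
            apply mul_le_mul_of_nonneg_left hlogTT
            positivity
        _ ≤ C2 := by rw [hC2def]; linarith
        _ ≤ max C1 C2 := le_max_right _ _
    · -- equation
      have hid2 : ((s.re:ℂ) + (s.im:ℂ) * Complex.I) = s := Complex.re_add_im s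
      have hid1 : ((s.re:ℂ) + ((α / Real.log T : ℝ):ℂ) + (s.im:ℂ) * Complex.I)
          = s + ((α / Real.log T : ℝ):ℂ) := by
        rw [add_right_comm, hid2]
      have hFs : F s ≠ 0 := hFne s hsimne
      rw [hHF, hHF s]
      rw [show (Real.exp (α/2) : ℂ) + (Q - (Real.exp (α/2) : ℂ)) = Q by ring]
      rw [hQdef, hid1, hid2, div_mul_cancel₀ _ hFs]
  · -- main regime : T₀ < T
    push_neg at hTsplit
    have hlogT : 2 + 2*|α| + K ≤ Real.log T := by
      rw [← hT₀log]
      exact Real.log_le_log hT₀pos hTsplit.le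
    have hT7 : (7:ℝ) ≤ T := by linarith
    set δ : ℝ := α / Real.log T with hδdef
    have hδabs : |δ| ≤ 1/2 := by
      rw [hδdef, abs_div, abs_of_pos hlogT0, div_le_iff₀ hlogT0]
      have := abs_nonneg α
      linarith
    set h : ℝ := δ / 2 with hhdef
    set z : ℂ := s / 2 with hzdef
    have hzre : 0 < z.re := by
      rw [hzdef, Complex.div_ofNat_re]
      linarith
    have hzim : z.im = s.im / 2 := by rw [hzdef, Complex.div_ofNat_im]
    have hzim3 : 3 ≤ z.im := by rw [hzim]; linarith
    have hh4 : |h| ≤ 1/4 := by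
      rw [hhdef, abs_div]
      rw [abs_of_pos (by norm_num : (0:ℝ) < 2)]
      linarith
    have hγ := gamma_ratio_est z h hzre hzim3 hh4
    -- notation
    set G : ℂ := Complex.Gamma (z + (h:ℂ)) * (Complex.Gamma z)⁻¹ with hGdef
    set X : ℂ := Complex.exp ((h:ℂ) * Complex.log z) with hXdef
    set w₁ : ℂ := Complex.log (1 + (δ:ℂ)/s) with hw₁def
    set w₂ : ℂ := Complex.log (1 + (-(δ:ℂ))/(1-s)) with hw₂def
    set w₃ : ℂ := Complex.log (Real.pi:ℂ) * (-(δ:ℂ)/2) with hw₃def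
    set Q : ℂ := Complex.exp (w₁ + w₂ + w₃) * G with hQdef
    set W : ℂ := w₁ + w₂ + w₃ + (h:ℂ) * Complex.log z with hWdef
    have hδval : |δ| = |α| / Real.log T := by
      rw [hδdef, abs_div, abs_of_pos hlogT0]
    -- nonvanishing
    have hs0 : s ≠ 0 := by
      intro h0
      rw [h0] at hsimne
      simp at hsimne
    have h1s : (1:ℂ) - s ≠ 0 := by
      intro h0
      have h1 : ((1:ℂ) - s).im = 0 := by rw [h0]; simp
      simp only [Complex.sub_im, Complex.one_im, zero_sub, neg_eq_zero] at h1
      exact hsimne h1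
    have hsabs : T ≤ ‖s‖ := by
      calc T ≤ s.im := hs3
        _ ≤ |s.im| := le_abs_self _
        _ ≤ ‖s‖ := Complex.abs_im_le_norm s
    have h1sabs : T ≤ ‖1 - s‖ := by
      calc T ≤ s.im := hs3
        _ ≤ |((1:ℂ) - s).im| := by
            simp only [Complex.sub_im, Complex.one_im, zero_sub, abs_neg]
            exact le_abs_self _
        _ ≤ ‖1 - s‖ := Complex.abs_im_le_norm _
    -- norms of the small quantities
    have hn1 : ‖(δ:ℂ)/s‖ ≤ |δ| := by
      rw [norm_div, Complex.norm_real, Real.norm_eq_abs]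
      apply div_le_self (abs_nonneg δ)
      linarith
    have hn2 : ‖(-(δ:ℂ))/(1-s)‖ ≤ |δ| := by
      rw [norm_div, norm_neg, Complex.norm_real, Real.norm_eq_abs]
      apply div_le_self (abs_nonneg δ)
      linarith
    have hne1 : (1:ℂ) + (δ:ℂ)/s ≠ 0 := by
      intro he
      have h1 : ‖(1:ℂ)‖ = ‖-((δ:ℂ)/s)‖ := by congr 1; linear_combination he
      rw [norm_one, norm_neg] at h1
      rw [← h1] at hn1
      linarith
    have hne2 : (1:ℂ) + (-(δ:ℂ))/(1-s) ≠ 0 := by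
      intro he
      have h1 : ‖(1:ℂ)‖ = ‖-((-(δ:ℂ))/(1-s))‖ := by congr 1; linear_combination he
      rw [norm_one, norm_neg] at h1
      rw [← h1] at hn2
      linarith
    have hw₁bd : ‖w₁‖ ≤ (3/2) * |δ| := by
      calc ‖w₁‖ ≤ (3/2) * ‖(δ:ℂ)/s‖ :=
            Complex.norm_log_one_add_half_le_self (by linarith)
        _ ≤ (3/2) * |δ| := by linarith
    have hw₂bd : ‖w₂‖ ≤ (3/2) * |δ| := by
      calc ‖w₂‖ ≤ (3/2) * ‖(-(δ:ℂ))/(1-s)‖ :=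
            Complex.norm_log_one_add_half_le_self (by linarith)
        _ ≤ (3/2) * |δ| := by linarith
    have hlogpi2 : Real.log Real.pi ≤ 2 := by
      have h1 : Real.pi ≤ 4 := by linarith [Real.pi_le_four]
      have h2 : Real.log Real.pi ≤ Real.log 4 := Real.log_le_log Real.pi_pos h1
      have h3 : Real.log 4 = 2 * Real.log 2 := by
        rw [show (4:ℝ) = 2^2 by norm_num, Real.log_pow]
        push_cast
        ring
      have h4 := Real.log_two_lt_d9
      linarith
    have hlogpi0 : 0 ≤ Real.log Real.pi := Real.log_nonneg (by linarith [Real.pi_gt_three])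
    have hw₃bd : ‖w₃‖ ≤ |δ| := by
      rw [hw₃def, norm_mul, ← Complex.ofReal_log Real.pi_pos.le, Complex.norm_real,
        Real.norm_eq_abs, _root_.abs_of_nonneg hlogpi0]
      have h1 : ‖(-(δ:ℂ)/2)‖ = |δ|/2 := by
        rw [norm_div, norm_neg, Complex.norm_real, Real.norm_eq_abs]
        norm_num
      rw [h1]
      calc Real.log Real.pi * (|δ|/2) ≤ 2 * (|δ|/2) :=
            mul_le_mul_of_nonneg_right hlogpi2 (by positivity)
        _ = |δ| := by ring
    -- the exponent estimate
    have hαh : ((h:ℝ):ℂ) * ((Real.log T : ℝ):ℂ) = (((α/2 : ℝ)):ℂ) := by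
      rw [← Complex.ofReal_mul]
      congr 1
      rw [hhdef, hδdef]
      field_simp
    have habs_z : ‖z‖ = ‖s‖ / 2 := by
      rw [hzdef, norm_div]
      norm_num
    have habs_z_up : ‖z‖ ≤ (A+2) * T := by
      have h1 : ‖s‖ ≤ |s.re| + |s.im| := Complex.norm_le_abs_re_add_abs_im s
      have h2 : |s.re| ≤ A := by
        rw [abs_le]
        constructor <;> linarith
      have h3 : |s.im| ≤ 2*T := by
        rw [abs_le]
        constructor <;> linarith
      have h4 : A + 2*T ≤ (A+2)*T := by nlinarith
      rw [habs_z]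
      linarith
    have habs_z_lo : T / (A+2) ≤ ‖z‖ := by
      have h1 : s.im / 2 ≤ ‖z‖ := by
        rw [habs_z]
        have := Complex.abs_im_le_norm s
        have h2 := le_abs_self s.im
        linarith
      have h2 : T / (A+2) ≤ T / 2 := by
        apply div_le_div_of_nonneg_left (by linarith) (by norm_num)
        linarith
      linarith
    have hz0 : z ≠ 0 := by
      intro h0
      rw [h0] at hzim3
      simp at hzim3
      linarith
    have habs_z_pos : 0 < ‖z‖ := by
      rw [habs_z]
      have := hsabs
      linarith
    have hA2pos : (0:ℝ) < A + 2 := by linarith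
    have hlog_diff : |Real.log (‖z‖) - Real.log T| ≤ Real.log (A+2) := by
      have hup : Real.log (‖z‖) ≤ Real.log (A+2) + Real.log T := by
        rw [← Real.log_mul hA2pos.ne' (by linarith : T ≠ 0)]
        exact Real.log_le_log habs_z_pos habs_z_up
      have hlo : Real.log T - Real.log (A+2) ≤ Real.log (‖z‖) := by
        rw [← Real.log_div (by linarith : T ≠ 0) hA2pos.ne']
        apply Real.log_le_log _ habs_z_lo
        positivity
      rw [abs_le]
      constructor <;> linarith
    have hlogzT : ‖Complex.log z - ((Real.log T : ℝ):ℂ)‖ ≤ Real.log (A+2) + Real.pi := by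
      apply le_trans (Complex.norm_le_abs_re_add_abs_im _)
      have hre : (Complex.log z - ((Real.log T : ℝ):ℂ)).re
          = Real.log (‖z‖) - Real.log T := by
        simp [Complex.log_re]
      have him' : (Complex.log z - ((Real.log T : ℝ):ℂ)).im = Complex.arg z := by
        simp [Complex.log_im]
      rw [hre, him']
      have := Complex.abs_arg_le_pi z
      linarith [hlog_diff]
    have hWc : ‖W - (((α/2 : ℝ)):ℂ)‖ ≤ K / Real.log T := by
      have e1 : W - (((α/2 : ℝ)):ℂ) = w₁ + w₂ + w₃
          + (h:ℂ) * (Complex.log z - ((Real.log T : ℝ):ℂ)) := by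
        rw [hWdef, ← hαh]
        ring
      rw [e1]
      have h2 : ‖(h:ℂ) * (Complex.log z - ((Real.log T : ℝ):ℂ))‖
          ≤ (|δ|/2) * (Real.log (A+2) + Real.pi) := by
        rw [norm_mul, Complex.norm_real, Real.norm_eq_abs]
        have h3 : |h| = |δ|/2 := by
          rw [hhdef, abs_div]
          norm_num
        rw [h3]
        apply mul_le_mul_of_nonneg_left hlogzT
        positivity
      calc ‖w₁ + w₂ + w₃ + (h:ℂ) * (Complex.log z - ((Real.log T : ℝ):ℂ))‖
          ≤ ‖w₁ + w₂ + w₃‖ + ‖(h:ℂ) * (Complex.log z - ((Real.log T : ℝ):ℂ))‖ :=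
            norm_add_le _ _
        _ ≤ (‖w₁‖ + ‖w₂‖ + ‖w₃‖) + (|δ|/2) * (Real.log (A+2) + Real.pi) := by
            have := norm_add_le (w₁ + w₂) w₃
            have := norm_add_le w₁ w₂
            linarith
        _ ≤ |δ| * (5 + Real.log (A+2) + Real.pi) := by
            have h5 : (0:ℝ) ≤ |δ| := abs_nonneg δ
            have h6 : (0:ℝ) ≤ Real.log (A+2) + Real.pi := by
              have := Real.pi_pos
              linarith
            have h7 : (|δ|/2) * (Real.log (A+2) + Real.pi)
                ≤ |δ| * (Real.log (A+2) + Real.pi) :=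
              mul_le_mul_of_nonneg_right (by linarith) h6
            have h8 : |δ| * (5 + Real.log (A+2) + Real.pi)
                = 5*|δ| + |δ| * (Real.log (A+2) + Real.pi) := by ring
            linarith [hw₁bd, hw₂bd, hw₃bd]
        _ = K / Real.log T := by
            rw [hKdef, hδval]
            field_simp
    have hKlog : K / Real.log T ≤ 1 := by
      rw [div_le_one hlogT0]
      have := abs_nonneg α
      linarith
    have hWc1 : ‖W - (((α/2 : ℝ)):ℂ)‖ ≤ 1 := le_trans hWc hKlog
    -- Gamma z nonzero
    have hΓz : Complex.Gamma z ≠ 0 := by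
      apply Complex.Gamma_ne_zero
      intro m he
      have h0 : z.im = 0 := by rw [he]; simp
      linarith
    -- the exact equation
    refine ⟨Q - ((Real.exp (α/2) : ℝ):ℂ), ?_, ?_⟩
    · -- the bound
      have eW : Complex.exp W = Complex.exp (w₁ + w₂ + w₃) * X := by
        rw [hWdef, Complex.exp_add, hXdef]
      have hsplit : Q - ((Real.exp (α/2) : ℝ):ℂ)
          = (Complex.exp W - Complex.exp (((α/2:ℝ)):ℂ))
            + Complex.exp (w₁ + w₂ + w₃) * (G - X) := by
        rw [Complex.ofReal_exp, hQdef, eW]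
        ring
      rw [hsplit]
      have hterm1 : ‖Complex.exp W - Complex.exp (((α/2:ℝ)):ℂ)‖
          ≤ Real.exp (α/2) * (2 * (K / Real.log T)) := by
        have e2 : Complex.exp W - Complex.exp (((α/2:ℝ)):ℂ)
            = Complex.exp (((α/2:ℝ)):ℂ) * (Complex.exp (W - (((α/2:ℝ)):ℂ)) - 1) := by
          rw [mul_sub, mul_one, ← Complex.exp_add,
            show (((α/2:ℝ)):ℂ) + (W - (((α/2:ℝ)):ℂ)) = W by ring]
        rw [e2, norm_mul]
        have h7 : ‖Complex.exp (((α/2:ℝ)):ℂ)‖ = Real.exp (α/2) := by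
          rw [Complex.norm_exp]
          simp
        rw [h7]
        apply mul_le_mul_of_nonneg_left _ (Real.exp_pos _).le
        calc ‖Complex.exp (W - (((α/2:ℝ)):ℂ)) - 1‖
            ≤ 2 * ‖W - (((α/2:ℝ)):ℂ)‖ := Complex.norm_exp_sub_one_le hWc1
          _ ≤ 2 * (K / Real.log T) := by
              linarith [hWc]
      have hterm2 : ‖Complex.exp (w₁ + w₂ + w₃) * (G - X)‖
          ≤ Real.exp (α/2) * (36 / Real.log T) := by
        rw [norm_mul]
        have h8 : ‖G - X‖ ≤ ‖X‖ * (6 / z.im) := hγ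
        have h9 : ‖Complex.exp (w₁ + w₂ + w₃)‖ * (‖X‖ * (6 / z.im))
            = ‖Complex.exp W‖ * (6 / z.im) := by
          rw [eW, norm_mul]
          ring
        have h10 : ‖Complex.exp W‖ ≤ Real.exp (α/2 + 1) := by
          rw [Complex.norm_exp]
          apply Real.exp_le_exp.mpr
          have h11 : W.re = (α/2) + (W - (((α/2:ℝ)):ℂ)).re := by
            simp
          rw [h11]
          have h12 : (W - (((α/2:ℝ)):ℂ)).re ≤ ‖W - (((α/2:ℝ)):ℂ)‖ := by
            exact Complex.re_le_norm _
          linarith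
        have h13 : 6 / z.im ≤ 12 / T := by
          rw [div_le_div_iff₀ (by linarith) (by linarith), hzim]
          have : s.im / 2 * 12 = 6 * s.im := by ring
          linarith
        have h14 : 12 / T ≤ 12 / Real.log T := by
          apply div_le_div_of_nonneg_left (by norm_num) hlogT0
          have := Real.log_le_sub_one_of_pos (by linarith : (0:ℝ) < T)
          linarith
        have h15 : Real.exp (α/2 + 1) ≤ Real.exp (α/2) * 3 := by
          rw [Real.exp_add]
          have h16 := Real.exp_one_lt_d9
          exact mul_le_mul_of_nonneg_left (by linarith) (Real.exp_pos (α/2)).le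
        have hzimpos : (0:ℝ) < z.im := by linarith
        calc ‖Complex.exp (w₁ + w₂ + w₃)‖ * ‖G - X‖
            ≤ ‖Complex.exp (w₁ + w₂ + w₃)‖ * (‖X‖ * (6 / z.im)) := by
              apply mul_le_mul_of_nonneg_left h8 (norm_nonneg _)
          _ = ‖Complex.exp W‖ * (6 / z.im) := h9
          _ ≤ Real.exp (α/2 + 1) * (12 / Real.log T) := by
              apply mul_le_mul h10 (by linarith) (by positivity) (Real.exp_pos _).le
          _ ≤ Real.exp (α/2) * 3 * (12 / Real.log T) := by
              apply mul_le_mul_of_nonneg_right h15 (by positivity)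
          _ = Real.exp (α/2) * (36 / Real.log T) := by ring
      calc ‖(Complex.exp W - Complex.exp (((α/2:ℝ)):ℂ))
            + Complex.exp (w₁ + w₂ + w₃) * (G - X)‖
          ≤ ‖Complex.exp W - Complex.exp (((α/2:ℝ)):ℂ)‖
            + ‖Complex.exp (w₁ + w₂ + w₃) * (G - X)‖ := norm_add_le _ _
        _ ≤ Real.exp (α/2) * (2 * (K / Real.log T)) + Real.exp (α/2) * (36 / Real.log T) := by
            linarith
        _ = (Real.exp (α/2) * (2*K + 36)) / Real.log T := by
            field_simp
        _ ≤ max C1 C2 / Real.log T := by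
            gcongr
            calc Real.exp (α/2) * (2*K + 36) ≤ C1 := by rw [hC1def]; linarith
              _ ≤ max C1 C2 := le_max_left _ _
    · -- the equation
      have e4 : (s + (δ:ℂ))/2 = z + (h:ℂ) := by
        rw [hzdef, hhdef]
        push_cast
        ring
      have e5 : Complex.Gamma (z + (h:ℂ)) = G * Complex.Gamma z := by
        rw [hGdef, mul_assoc, inv_mul_cancel₀ hΓz, mul_one]
      have e1 : Complex.exp w₁ * s = s + (δ:ℂ) := by
        rw [hw₁def, Complex.exp_log hne1]
        field_simp
      have e2 : Complex.exp w₂ * (1 - s) = 1 - (s + (δ:ℂ)) := by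
        rw [hw₂def, Complex.exp_log hne2]
        field_simp
        ring
      have e3 : Complex.exp (Complex.log (Real.pi:ℂ) * (-(s + (δ:ℂ))/2))
          = Complex.exp (Complex.log (Real.pi:ℂ) * (-s/2)) * Complex.exp w₃ := by
        rw [hw₃def, ← Complex.exp_add]
        congr 1
        ring
      rw [hHF, hHF s]
      rw [show ((Real.exp (α/2) : ℝ):ℂ) + (Q - ((Real.exp (α/2) : ℝ):ℂ)) = Q by ring]
      show (1/2:ℂ) * (s + (δ:ℂ)) * (1 - (s + (δ:ℂ)))
          * Complex.exp (Complex.log (Real.pi:ℂ) * (-(s + (δ:ℂ))/2))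
          * Complex.Gamma ((s + (δ:ℂ))/2)
        = Q * ((1/2:ℂ) * s * (1 - s) * Complex.exp (Complex.log (Real.pi:ℂ) * (-s/2))
          * Complex.Gamma (s/2))
      rw [e4, e5, e3, ← e2, ← e1, hQdef, Complex.exp_add, Complex.exp_add, ← hzdef]
      ring
end
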